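/- Assume the optimality set OPT(b) of (P_b) is non-empty and bounded. Let I_1, …, I_K enumerate all bases that are both primal feasible and dual feasible, and define the equivalence relation j ~ k iff x(I_j, b) = x(I_k, b) on {1,…,K}, with equivalence classes B_1, …, B_T. Then there exists ε > 0 such that for every b̃ ∈ ℝ^m with P(b̃) ≠ ∅ and ‖b̃ − b‖ < ε, and for every class index 1 ≤ t ≤ T, there exists k ∈ B_t with x(I_k, b̃) ∈ OPT(b̃). -/

import Mathlib

open Matrix

noncomputable section

variable {m d : ℕ}

/-- The primal feasible set `P(b) = {x : A x = b, x ≥ 0}`. -/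
def feasSet (A : Matrix (Fin m) (Fin d) ℝ) (b : Fin m → ℝ) : Set (Fin d → ℝ) :=
  {x | A *ᵥ x = b ∧ ∀ i, 0 ≤ x i}

/-- The optimality set `OPT(b)` of the primal program `(P_b)`. -/
def optSet (A : Matrix (Fin m) (Fin d) ℝ) (b : Fin m → ℝ) (c : Fin d → ℝ) :
    Set (Fin d → ℝ) :=
  {x | x ∈ feasSet A b ∧ ∀ y ∈ feasSet A b, c ⬝ᵥ x ≤ c ⬝ᵥ y}

/-- The dual feasible set `{λ : Aᵀ λ ≤ c}`. -/
def dualFeasSet (A : Matrix (Fin m) (Fin d) ℝ) (c : Fin d → ℝ) : Set (Fin m → ℝ) :=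
  {l | ∀ j, (Aᵀ *ᵥ l) j ≤ c j}

/-- The set of optimal solutions of the dual program `(D_b)`. -/
def dualOptSet (A : Matrix (Fin m) (Fin d) ℝ) (b : Fin m → ℝ) (c : Fin d → ℝ) :
    Set (Fin m → ℝ) :=
  {l | l ∈ dualFeasSet A c ∧ ∀ mu ∈ dualFeasSet A c, b ⬝ᵥ mu ≤ b ⬝ᵥ l}

/-- The submatrix `A_I` of the columns indexed by `I`, where the subset
`I ⊆ {1,…,d}` of cardinality `m` is encoded by the strictly monotone
enumeration `e : Fin m → Fin d` of its elements. -/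
def subMat (A : Matrix (Fin m) (Fin d) ℝ) (e : Fin m → Fin d) :
    Matrix (Fin m) (Fin m) ℝ :=
  A.submatrix id e

/-- `e` encodes a basis: a subset of size `m` of the columns (strictly monotone
enumeration) whose corresponding submatrix `A_I` is invertible. -/
def IsBasis (A : Matrix (Fin m) (Fin d) ℝ) (e : Fin m → Fin d) : Prop :=
  StrictMono e ∧ IsUnit (subMat A e).det

/-- The primal basic solution `x(I, v)`: equal to `(A_I)⁻¹ v` on the coordinates
in `I` and `0` elsewhere. -/
def basicSol (A : Matrix (Fin m) (Fin d) ℝ) (e : Fin m → Fin d) (v : Fin m → ℝ) :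
    Fin d → ℝ :=
  fun i => ∑ j, if e j = i then ((subMat A e)⁻¹ *ᵥ v) j else 0

/-- The dual basic solution `λ(I) = (A_I)⁻ᵀ c_I`. -/
def dualSol (A : Matrix (Fin m) (Fin d) ℝ) (c : Fin d → ℝ) (e : Fin m → Fin d) :
    Fin m → ℝ :=
  ((subMat A e)ᵀ)⁻¹ *ᵥ fun j => c (e j)

/-- `I` is a dual feasible basis: `Aᵀ λ(I) ≤ c`. -/
def DualFeasibleBasis (A : Matrix (Fin m) (Fin d) ℝ) (c : Fin d → ℝ)
    (e : Fin m → Fin d) : Prop :=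
  IsBasis A e ∧ ∀ j, (Aᵀ *ᵥ dualSol A c e) j ≤ c j

/-- `I` is a primal feasible basis for `(P_b)`: `x(I,b) ≥ 0`. -/
def PrimalFeasibleBasis (A : Matrix (Fin m) (Fin d) ℝ) (b : Fin m → ℝ)
    (e : Fin m → Fin d) : Prop :=
  IsBasis A e ∧ ∀ i, 0 ≤ basicSol A e b i

namespace Stmt11Aux


variable {V : Type*} [NormedAddCommGroup V] [NormedSpace ℝ V] [FiniteDimensional ℝ V]
variable {ι : Type*} [Fintype ι]
set_option linter.unusedSectionVars false

/-- coefficient-style linear independence on a finite index set -/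
def IndepOn (g : ι → V) (T : Finset ι) : Prop :=
  ∀ l : ι → ℝ, (∀ i, l i ≠ 0 → i ∈ T) → ∑ i, l i • g i = 0 → l = 0

lemma sum_support_subset (g : ι → V) {T : Finset ι} {l : ι → ℝ}
    (hl : ∀ i, l i ≠ 0 → i ∈ T) :
    ∑ i, l i • g i = ∑ i ∈ T, l i • g i := by
  refine (Finset.sum_subset T.subset_univ ?_).symm
  intro i _ hi
  have : l i = 0 := by by_contra h; exact hi (hl i h)
  simp [this]

lemma sum_coe_finset (g : ι → V) (T : Finset ι) (l : ι → ℝ) :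
    ∑ t : {x // x ∈ T}, l t • g t = ∑ i ∈ T, l i • g i := by
  rw [← Finset.sum_coe_sort T (fun i => l i • g i)]

lemma indepOn_iff (g : ι → V) (T : Finset ι) :
    IndepOn g T ↔ LinearIndependent ℝ (fun t : {x // x ∈ T} => g t) := by
  constructor
  · intro H
    rw [Fintype.linearIndependent_iff]
    intro gl hgl t
    classical
    set l : ι → ℝ := fun i => if h : i ∈ T then gl ⟨i, h⟩ else 0 with hldef
    have hsupp : ∀ i, l i ≠ 0 → i ∈ T := by
      intro i hi
      by_contra h
      simp [hldef, h] at hi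
    have hsum : ∑ i, l i • g i = 0 := by
      rw [sum_support_subset g hsupp, ← sum_coe_finset g T l]
      rw [← hgl]
      refine Finset.sum_congr rfl ?_
      intro t _
      simp [hldef, t.2]
    have := H l hsupp hsum
    have : l t.1 = 0 := by rw [this]; rfl
    simpa [hldef, t.2] using this
  · intro H l hsupp hsum
    rw [Fintype.linearIndependent_iff] at H
    have h0 : ∑ t : {x // x ∈ T}, l t • g t = 0 := by
      rw [sum_coe_finset g T l, ← sum_support_subset g hsupp, hsum]
    have := H (fun t => l t.1) h0
    funext i
    by_cases h : i ∈ T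
    · exact this ⟨i, h⟩
    · by_contra hne
      exact h (hsupp i hne)

lemma IndepOn.mono {g : ι → V} {T T' : Finset ι} (h : IndepOn g T) (hsub : T' ⊆ T) :
    IndepOn g T' := fun l hl hs => h l (fun i hi => hsub (hl i hi)) hs

/-- coordinate functional gadget for an independent finite family -/
lemma exists_coord (g : ι → V) (T : Finset ι) (hT : IndepOn g T) :
    ∃ L : V →L[ℝ] (ι → ℝ), ∀ w : ι → ℝ, (∀ i, w i ≠ 0 → i ∈ T) →
      L (∑ i, w i • g i) = w := by
  classical
  have hli : LinearIndependent ℝ (fun t : {x // x ∈ T} => g t) := (indepOn_iff g T).mp hT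
  set R := Submodule.span ℝ (Set.range fun t : {x // x ∈ T} => g t) with hRdef
  let B : Module.Basis {x // x ∈ T} ℝ R := Module.Basis.span hli
  obtain ⟨Q, hQ⟩ := Submodule.exists_isCompl R
  let P : V →ₗ[ℝ] R := R.linearProjOfIsCompl Q hQ
  let Llin : V →ₗ[ℝ] (ι → ℝ) :=
    { toFun := fun v i => if h : i ∈ T then B.repr (P v) ⟨i, h⟩ else 0
      map_add' := by
        intro x y; funext i
        by_cases h : i ∈ T <;> simp [h]
      map_smul' := by
        intro s x; funext i
        by_cases h : i ∈ T <;> simp [h] }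
  refine ⟨Llin.toContinuousLinearMap, ?_⟩
  intro w hw
  have key : (∑ i, w i • g i) = ((∑ t : {x // x ∈ T}, w t.1 • B t : R) : V) := by
    rw [sum_support_subset g hw, ← sum_coe_finset g T w]
    push_cast
    refine Finset.sum_congr rfl ?_
    intro t _
    rw [Module.Basis.span_apply]
  have hPv : P (∑ i, w i • g i) = ∑ t : {x // x ∈ T}, w t.1 • B t := by
    rw [key]
    exact Submodule.linearProjOfIsCompl_apply_left hQ _
  have hrepr : B.repr (P (∑ i, w i • g i)) = ∑ t : {x // x ∈ T}, w t.1 • Finsupp.single t 1 := by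
    rw [hPv, map_sum]
    refine Finset.sum_congr rfl ?_
    intro t _
    rw [_root_.map_smul, B.repr_self]
  funext i
  show (if h : i ∈ T then B.repr (P (∑ i, w i • g i)) ⟨i, h⟩ else 0) = w i
  by_cases h : i ∈ T
  · rw [dif_pos h, hrepr]
    rw [Finsupp.finset_sum_apply]
    simp only [Finsupp.smul_apply, Finsupp.single_apply, smul_eq_mul]
    rw [Finset.sum_eq_single ⟨i, h⟩]
    · simp
    · intro b _ hb; simp [hb]
    · intro hb; exact absurd (Finset.mem_univ _) hb
  · rw [dif_neg h]
    by_contra hne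
    exact h (hw i fun hh => hne (hh ▸ rfl))



/-- the cone generated by `g i`, `i ∈ T`, with nonneg coefficients -/
def coneOn (g : ι → V) (T : Finset ι) : Set V :=
  {v | ∃ w : ι → ℝ, (∀ i, 0 ≤ w i) ∧ (∀ i, w i ≠ 0 → i ∈ T) ∧ ∑ i, w i • g i = v}

/-- Carathéodory-type support reduction for cones -/
lemma caratheodory_cone (g : ι → V) :
    ∀ (T : Finset ι) (w : ι → ℝ), (∀ i, 0 ≤ w i) → (∀ i, w i ≠ 0 → i ∈ T) →
    ∃ T' : Finset ι, T' ⊆ T ∧ IndepOn g T' ∧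
      (∑ i, w i • g i) ∈ coneOn g T' := by
  classical
  intro T
  induction T using Finset.strongInduction with
  | _ T ih =>
    intro w hw0 hwsupp
    by_cases hzero : ∃ j ∈ T, w j = 0
    · obtain ⟨j, hjT, hj0⟩ := hzero
      obtain ⟨T', hsub, hind, hmem⟩ := ih (T.erase j) (Finset.erase_ssubset hjT) w hw0
        (fun i hi => Finset.mem_erase.mpr ⟨fun h => hi (h ▸ hj0), hwsupp i hi⟩)
      exact ⟨T', hsub.trans (Finset.erase_subset _ _), hind, hmem⟩
    · push_neg at hzero
      by_cases hind : IndepOn g T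
      · exact ⟨T, Finset.Subset.refl T, hind, w, hw0, hwsupp, rfl⟩
      · -- dependent: find relation and reduce
        rw [IndepOn] at hind
        push_neg at hind
        obtain ⟨l, hlsupp, hlsum, hlne⟩ := hind
        -- wlog some positive coefficient
        have hex : ∃ l : ι → ℝ, (∀ i, l i ≠ 0 → i ∈ T) ∧ ∑ i, l i • g i = 0 ∧
            ∃ j ∈ T, 0 < l j := by
          by_cases hpos : ∃ j ∈ T, 0 < l j
          · exact ⟨l, hlsupp, hlsum, hpos⟩
          · refine ⟨-l, fun i hi => hlsupp i (by simpa using hi), by simpa using hlsum, ?_⟩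
            have : ∃ j, l j ≠ 0 := by
              by_contra h; push_neg at h; exact hlne (funext h)
            obtain ⟨j, hj⟩ := this
            push_neg at hpos
            have hjT := hlsupp j hj
            exact ⟨j, hjT, by simpa using lt_of_le_of_ne (hpos j hjT) hj⟩
        obtain ⟨l', hl'supp, hl'sum, j₁, hj₁T, hj₁pos⟩ := hex
        set Q := T.filter (fun j => 0 < l' j) with hQ
        have hQne : Q.Nonempty := ⟨j₁, Finset.mem_filter.mpr ⟨hj₁T, hj₁pos⟩⟩
        set t := Q.inf' hQne (fun j => w j / l' j) with ht
        obtain ⟨j₂, hj₂Q, hj₂⟩ := Finset.exists_mem_eq_inf' hQne (fun j => w j / l' j)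
        have hj₂T : j₂ ∈ T := (Finset.mem_filter.mp hj₂Q).1
        have hj₂pos : 0 < l' j₂ := (Finset.mem_filter.mp hj₂Q).2
        have htnonneg : 0 ≤ t := by
          rw [ht]
          apply Finset.le_inf'
          intro j hj
          have := (Finset.mem_filter.mp hj).2
          exact div_nonneg (hw0 j) this.le
        set w' := fun i => w i - t * l' i with hw'
        have hw'0 : ∀ i, 0 ≤ w' i := by
          intro i
          by_cases hi : 0 < l' i
          · have hiT : i ∈ T := hl'supp i hi.ne'
            have hiQ : i ∈ Q := Finset.mem_filter.mpr ⟨hiT, hi⟩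
            have : t ≤ w i / l' i := by rw [ht]; exact Finset.inf'_le _ hiQ
            have := (le_div_iff₀ hi).mp this
            simp only [hw']; linarith
          · push_neg at hi
            have : t * l' i ≤ 0 := mul_nonpos_of_nonneg_of_nonpos htnonneg hi
            simp only [hw']; linarith [hw0 i]
        have hw'j₂ : w' j₂ = 0 := by
          have : t = w j₂ / l' j₂ := hj₂
          simp only [hw', this]
          field_simp
          ring
        have hw'supp : ∀ i, w' i ≠ 0 → i ∈ T.erase j₂ := by
          intro i hi
          rw [Finset.mem_erase]
          refine ⟨fun h => hi (h ▸ hw'j₂), ?_⟩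
          by_contra hiT
          have h1 : w i = 0 := by
            by_contra h; exact hiT (hwsupp i h)
          have h2 : l' i = 0 := by
            by_contra h; exact hiT (hl'supp i h)
          exact hi (by simp [hw', h1, h2])
        have hsum' : ∑ i, w' i • g i = ∑ i, w i • g i := by
          simp only [hw', sub_smul, Finset.sum_sub_distrib, mul_smul]
          rw [← Finset.smul_sum, hl'sum]
          simp
        obtain ⟨T', hsub, hind', hmem⟩ := ih (T.erase j₂) (Finset.erase_ssubset hj₂T) w' hw'0 hw'supp
        rw [hsum'] at hmem
        exact ⟨T', hsub.trans (Finset.erase_subset _ _), hind', hmem⟩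

/-- a simplicial piece is closed -/
lemma coneOn_isClosed (g : ι → V) (T : Finset ι) (hT : IndepOn g T) :
    IsClosed (coneOn g T) := by
  classical
  obtain ⟨L, hL⟩ := exists_coord g T hT
  set Φ : (ι → ℝ) →ₗ[ℝ] V :=
    { toFun := fun w => ∑ i ∈ T, w i • g i
      map_add' := by intro x y; simp [add_smul, Finset.sum_add_distrib]
      map_smul' := by intro s x; simp [Finset.smul_sum, mul_smul] } with hΦ
  have hset : coneOn g T = ↑(LinearMap.range Φ) ∩ ⋂ i, {v | 0 ≤ L v i} := by
    ext v
    constructor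
    · rintro ⟨w, hw0, hwsupp, rfl⟩
      constructor
      · refine ⟨w, ?_⟩
        rw [hΦ]
        exact (sum_support_subset g hwsupp).symm
      · simp only [Set.mem_iInter, Set.mem_setOf_eq]
        intro i
        rw [hL w hwsupp]
        exact hw0 i
    · rintro ⟨⟨w0, hw0⟩, hpos⟩
      simp only [Set.mem_iInter, Set.mem_setOf_eq] at hpos
      set w : ι → ℝ := fun i => if i ∈ T then w0 i else 0 with hw
      have hwsupp : ∀ i, w i ≠ 0 → i ∈ T := by
        intro i hi; by_contra h; simp [hw, h] at hi
      have hsum : ∑ i, w i • g i = v := by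
        rw [sum_support_subset g hwsupp, ← hw0, hΦ]
        simp only [LinearMap.coe_mk, AddHom.coe_mk]
        refine Finset.sum_congr rfl ?_
        intro i hi
        simp [hw, hi]
      refine ⟨w, ?_, hwsupp, hsum⟩
      intro i
      rcases eq_or_ne (w i) 0 with h | h
      · simp [h]
      · have hv : L v = w := by rw [← hsum, hL w hwsupp]
        have := hpos i
        rw [hv] at this
        exact this
  rw [hset]
  refine IsClosed.inter (Submodule.closed_of_finiteDimensional _) ?_
  refine isClosed_iInter ?_
  intro i
  have hcont : Continuous fun v => L v i := (continuous_apply i).comp L.continuous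
  exact isClosed_le continuous_const hcont

/-- a finitely generated cone is closed -/
lemma coneGen_isClosed (g : ι → V) :
    IsClosed {v | ∃ w : ι → ℝ, (∀ i, 0 ≤ w i) ∧ ∑ i, w i • g i = v} := by
  classical
  have hset : {v | ∃ w : ι → ℝ, (∀ i, 0 ≤ w i) ∧ ∑ i, w i • g i = v}
      = ⋃ T ∈ {T : Finset ι | IndepOn g T}, coneOn g T := by
    ext v
    constructor
    · rintro ⟨w, hw0, rfl⟩
      obtain ⟨T', _, hind, hmem⟩ := caratheodory_cone g Finset.univ w hw0 (fun i _ => Finset.mem_univ i)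
      exact Set.mem_biUnion hind hmem
    · rintro ⟨s, ⟨T, rfl⟩, hs⟩
      simp only [Set.mem_iUnion, Set.mem_setOf_eq] at hs
      obtain ⟨hT, w, hw0, hwsupp, hsum⟩ := hs
      exact ⟨w, hw0, hsum⟩
  rw [hset]
  refine Set.Finite.isClosed_biUnion (Set.toFinite _) ?_
  intro T hT
  exact coneOn_isClosed g T hT



/-! ### separation -/

lemma exists_sep_functional {C : Set V} (hC : IsClosed C) (hconv : Convex ℝ C)
    (hcone : ∀ v ∈ C, ∀ t : ℝ, 0 ≤ t → t • v ∈ C) (h0 : (0 : V) ∈ C)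
    {x : V} (hx : x ∉ C) :
    ∃ f : V →L[ℝ] ℝ, (∀ v ∈ C, f v ≤ 0) ∧ 0 < f x := by
  obtain ⟨f, s, hfs, hsf⟩ := geometric_hahn_banach_closed_point hconv hC hx
  have hs0 : 0 < s := by
    have := hfs 0 h0
    simpa using this
  refine ⟨f, ?_, ?_⟩
  · intro v hv
    by_contra h
    push_neg at h
    have ht : 0 ≤ (s + 1) / f v := div_nonneg (by linarith) h.le
    have := hfs _ (hcone v hv _ ht)
    rw [ContinuousLinearMap.map_smul] at this
    simp only [smul_eq_mul] at this
    rw [div_mul_cancel₀ _ h.ne'] at this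
    linarith
  · linarith

lemma exists_sep_vec {m' : ℕ} {C : Set (Fin m' → ℝ)} (hC : IsClosed C) (hconv : Convex ℝ C)
    (hcone : ∀ v ∈ C, ∀ t : ℝ, 0 ≤ t → t • v ∈ C) (h0 : (0 : Fin m' → ℝ) ∈ C)
    {x : Fin m' → ℝ} (hx : x ∉ C) :
    ∃ u : Fin m' → ℝ, (∀ v ∈ C, u ⬝ᵥ v ≤ 0) ∧ 0 < u ⬝ᵥ x := by
  obtain ⟨f, hf1, hf2⟩ := exists_sep_functional hC hconv hcone h0 hx
  set u : Fin m' → ℝ := fun i => f (Pi.single i (1:ℝ)) with hu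
  have hkey : ∀ y : Fin m' → ℝ, f y = u ⬝ᵥ y := by
    intro y
    have hrep : y = ∑ i, y i • (Pi.single i (1 : ℝ) : Fin m' → ℝ) := by
      funext j
      rw [Finset.sum_apply]
      simp only [Pi.smul_apply, smul_eq_mul]
      rw [Finset.sum_eq_single j]
      · simp
      · intro b _ hb
        have : ¬ (j = b) := fun h => hb h.symm
        simp [Pi.single_apply, this]
      · intro h; exact absurd (Finset.mem_univ _) h
    conv_lhs => rw [hrep]
    rw [map_sum]
    simp only [ContinuousLinearMap.map_smul, smul_eq_mul]
    rw [dotProduct]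
    exact Finset.sum_congr rfl fun i _ => mul_comm _ _
  refine ⟨u, fun v hv => ?_, ?_⟩
  · rw [← hkey]; exact hf1 v hv
  · rw [← hkey]; exact hf2

/-! ### LP-specific machinery -/

variable {m d : ℕ}

def colA (A : Matrix (Fin m) (Fin d) ℝ) (j : Fin d) : Fin m → ℝ := fun i => A i j

lemma mulVec_eq_sum (A : Matrix (Fin m) (Fin d) ℝ) (w : Fin d → ℝ) :
    A *ᵥ w = ∑ j, w j • colA A j := by
  funext i
  rw [Finset.sum_apply, mulVec, dotProduct]
  exact Finset.sum_congr rfl fun j _ => mul_comm _ _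

lemma transp_mulVec_apply (A : Matrix (Fin m) (Fin d) ℝ) (u : Fin m → ℝ) (j : Fin d) :
    (Aᵀ *ᵥ u) j = colA A j ⬝ᵥ u := by
  rw [mulVec, dotProduct, dotProduct]
  exact Finset.sum_congr rfl fun i _ => rfl

lemma mulVec_surj {A : Matrix (Fin m) (Fin d) ℝ} (hA : A.rank = m) (v : Fin m → ℝ) :
    ∃ x, A *ᵥ x = v := by
  have hfr : Module.finrank ℝ (Fin m → ℝ) = m := Module.finrank_fin_fun ℝ
  have : LinearMap.range A.mulVecLin = ⊤ := by
    apply Submodule.eq_top_of_finrank_eq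
    rw [hfr]
    exact hA
  have hv : v ∈ LinearMap.range A.mulVecLin := this ▸ Submodule.mem_top
  obtain ⟨x, hx⟩ := hv
  exact ⟨x, hx⟩

lemma transp_inj {A : Matrix (Fin m) (Fin d) ℝ} (hA : A.rank = m) {u : Fin m → ℝ}
    (h : Aᵀ *ᵥ u = 0) : u = 0 := by
  obtain ⟨x, hx⟩ := mulVec_surj hA u
  have h1 : u ⬝ᵥ u = 0 := by
    calc u ⬝ᵥ u = u ⬝ᵥ (A *ᵥ x) := by rw [hx]
    _ = (u ᵥ* A) ⬝ᵥ x := dotProduct_mulVec u A x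
    _ = (Aᵀ *ᵥ u) ⬝ᵥ x := by rw [mulVec_transpose]
    _ = 0 := by rw [h]; simp
  funext i
  have : ∀ i ∈ Finset.univ, (0:ℝ) ≤ u i * u i := fun i _ => mul_self_nonneg _
  have := (Finset.sum_eq_zero_iff_of_nonneg this).mp h1 i (Finset.mem_univ i)
  have := mul_self_eq_zero.mp this
  simpa using this

/-- the dual feasible set with equality constraints on `S` -/
def DS (A : Matrix (Fin m) (Fin d) ℝ) (c : Fin d → ℝ) (S : Finset (Fin d)) :
    Set (Fin m → ℝ) :=
  {μ | (∀ j, (Aᵀ *ᵥ μ) j ≤ c j) ∧ ∀ j ∈ S, (Aᵀ *ᵥ μ) j = c j}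

/-- active set -/
def Zact (A : Matrix (Fin m) (Fin d) ℝ) (c : Fin d → ℝ) (μ : Fin m → ℝ) : Finset (Fin d) :=
  Finset.univ.filter (fun j => (Aᵀ *ᵥ μ) j = c j)

lemma mem_Zact {A : Matrix (Fin m) (Fin d) ℝ} {c : Fin d → ℝ} {μ : Fin m → ℝ} {j : Fin d} :
    j ∈ Zact A c μ ↔ (Aᵀ *ᵥ μ) j = c j := by
  simp [Zact]

lemma S_sub_Zact {A : Matrix (Fin m) (Fin d) ℝ} {c : Fin d → ℝ} {S : Finset (Fin d)}
    {μ : Fin m → ℝ} (hμ : μ ∈ DS A c S) : S ⊆ Zact A c μ :=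
  fun j hj => mem_Zact.mpr (hμ.2 j hj)

def fullRk (A : Matrix (Fin m) (Fin d) ℝ) (c : Fin d → ℝ) (μ : Fin m → ℝ) : Prop :=
  ∀ u : Fin m → ℝ, (∀ j ∈ Zact A c μ, (Aᵀ *ᵥ u) j = 0) → u = 0

lemma mulVec_line (A : Matrix (Fin m) (Fin d) ℝ) (μ u : Fin m → ℝ) (t : ℝ) (j : Fin d) :
    (Aᵀ *ᵥ (μ + t • u)) j = (Aᵀ *ᵥ μ) j + t * (Aᵀ *ᵥ u) j := by
  rw [mulVec_add, mulVec_smul]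
  simp

lemma move {A : Matrix (Fin m) (Fin d) ℝ} {c : Fin d → ℝ} {S : Finset (Fin d)}
    {μ u : Fin m → ℝ} (hμ : μ ∈ DS A c S) (hu : ∀ j ∈ Zact A c μ, (Aᵀ *ᵥ u) j = 0) :
    (∀ t : ℝ, 0 ≤ t → μ + t • u ∈ DS A c S) ∨
    (∃ t : ℝ, 0 < t ∧ μ + t • u ∈ DS A c S ∧
      ∃ j, j ∉ Zact A c μ ∧ (Aᵀ *ᵥ (μ + t • u)) j = c j) := by
  classical
  set F := Finset.univ.filter (fun j => j ∉ Zact A c μ ∧ 0 < (Aᵀ *ᵥ u) j) with hF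
  have hmemDS : ∀ t : ℝ, 0 ≤ t → (∀ j ∈ F, (Aᵀ *ᵥ (μ + t • u)) j ≤ c j) → μ + t • u ∈ DS A c S := by
    intro t ht hFgood
    constructor
    · intro j
      by_cases hj : j ∈ Zact A c μ
      · rw [mulVec_line, hu j hj, mul_zero, add_zero]
        exact le_of_eq (mem_Zact.mp hj)
      · by_cases hjF : j ∈ F
        · exact hFgood j hjF
        · have hle : (Aᵀ *ᵥ u) j ≤ 0 := by
            by_contra h
            push_neg at h
            exact hjF (Finset.mem_filter.mpr ⟨Finset.mem_univ j, hj, h⟩)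
          rw [mulVec_line]
          have := hμ.1 j
          nlinarith
    · intro j hj
      have hjz := S_sub_Zact hμ hj
      rw [mulVec_line, hu j hjz, mul_zero, add_zero]
      exact mem_Zact.mp hjz
  by_cases hFne : F.Nonempty
  · right
    set t := F.inf' hFne (fun j => (c j - (Aᵀ *ᵥ μ) j) / ((Aᵀ *ᵥ u) j)) with ht
    have hslack : ∀ j ∈ F, 0 < c j - (Aᵀ *ᵥ μ) j := by
      intro j hj
      obtain ⟨_, hjz, _⟩ := Finset.mem_filter.mp hj
      have h1 := hμ.1 j
      have h2 : (Aᵀ *ᵥ μ) j ≠ c j := fun h => hjz (mem_Zact.mpr h)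
      cases lt_or_eq_of_le h1 with
      | inl h => linarith
      | inr h => exact absurd h h2
    have hupos : ∀ j ∈ F, 0 < (Aᵀ *ᵥ u) j := fun j hj => (Finset.mem_filter.mp hj).2.2
    have htpos : 0 < t := by
      rw [ht, Finset.lt_inf'_iff]
      intro j hj
      exact div_pos (hslack j hj) (hupos j hj)
    obtain ⟨j₂, hj₂F, hj₂⟩ := Finset.exists_mem_eq_inf' hFne (fun j => (c j - (Aᵀ *ᵥ μ) j) / ((Aᵀ *ᵥ u) j))
    refine ⟨t, htpos, hmemDS t htpos.le ?_, j₂, (Finset.mem_filter.mp hj₂F).2.1, ?_⟩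
    · intro j hj
      rw [mulVec_line]
      have hle : t ≤ (c j - (Aᵀ *ᵥ μ) j) / ((Aᵀ *ᵥ u) j) := by
        rw [ht]; exact Finset.inf'_le _ hj
      have := (le_div_iff₀ (hupos j hj)).mp hle
      linarith
    · rw [mulVec_line]
      have : t = (c j₂ - (Aᵀ *ᵥ μ) j₂) / ((Aᵀ *ᵥ u) j₂) := hj₂
      rw [this, div_mul_cancel₀ _ (hupos j₂ hj₂F).ne']
      ring
  · left
    intro t ht
    apply hmemDS t ht
    intro j hj
    exact absurd ⟨j, hj⟩ hFne

lemma move' {A : Matrix (Fin m) (Fin d) ℝ} {c : Fin d → ℝ} {S : Finset (Fin d)}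
    {μ u : Fin m → ℝ} (hμ : μ ∈ DS A c S) (huZ : ∀ j ∈ Zact A c μ, (Aᵀ *ᵥ u) j ≤ 0)
    (huS : ∀ j ∈ S, (Aᵀ *ᵥ u) j = 0) :
    ∃ t : ℝ, 0 < t ∧ μ + t • u ∈ DS A c S := by
  classical
  set F := Finset.univ.filter (fun j => j ∉ Zact A c μ ∧ 0 < (Aᵀ *ᵥ u) j) with hF
  have hslack : ∀ j ∈ F, 0 < c j - (Aᵀ *ᵥ μ) j := by
    intro j hj
    obtain ⟨_, hjz, _⟩ := Finset.mem_filter.mp hj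
    have h1 := hμ.1 j
    have h2 : (Aᵀ *ᵥ μ) j ≠ c j := fun h => hjz (mem_Zact.mpr h)
    cases lt_or_eq_of_le h1 with
    | inl h => linarith
    | inr h => exact absurd h h2
  have hupos : ∀ j ∈ F, 0 < (Aᵀ *ᵥ u) j := fun j hj => (Finset.mem_filter.mp hj).2.2
  by_cases hFne : F.Nonempty
  · set t := F.inf' hFne (fun j => (c j - (Aᵀ *ᵥ μ) j) / ((Aᵀ *ᵥ u) j)) with ht
    have htpos : 0 < t := by
      rw [ht, Finset.lt_inf'_iff]
      intro j hj
      exact div_pos (hslack j hj) (hupos j hj)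
    refine ⟨t, htpos, ?_, ?_⟩
    · intro j
      by_cases hj : j ∈ Zact A c μ
      · rw [mulVec_line]
        have h1 := huZ j hj
        have h2 := le_of_eq (mem_Zact.mp hj)
        nlinarith
      · by_cases hjF : j ∈ F
        · rw [mulVec_line]
          have hle : t ≤ (c j - (Aᵀ *ᵥ μ) j) / ((Aᵀ *ᵥ u) j) := by
            rw [ht]; exact Finset.inf'_le _ hjF
          have := (le_div_iff₀ (hupos j hjF)).mp hle
          linarith
        · have hle : (Aᵀ *ᵥ u) j ≤ 0 := by
            by_contra h
            push_neg at h
            exact hjF (Finset.mem_filter.mpr ⟨Finset.mem_univ j, hj, h⟩)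
          rw [mulVec_line]
          have := hμ.1 j
          nlinarith
    · intro j hj
      rw [mulVec_line, huS j hj, mul_zero, add_zero]
      exact hμ.2 j hj
  · refine ⟨1, one_pos, ?_, ?_⟩
    · intro j
      by_cases hj : j ∈ Zact A c μ
      · rw [mulVec_line]
        have h1 := huZ j hj
        have h2 := le_of_eq (mem_Zact.mp hj)
        linarith
      · have hle : (Aᵀ *ᵥ u) j ≤ 0 := by
          by_contra h
          push_neg at h
          exact hFne ⟨j, Finset.mem_filter.mpr ⟨Finset.mem_univ j, hj, h⟩⟩
        rw [mulVec_line]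
        have := hμ.1 j
        linarith
    · intro j hj
      rw [mulVec_line, huS j hj, mul_zero, add_zero]
      exact hμ.2 j hj



lemma unbounded_dir_zero {A : Matrix (Fin m) (Fin d) ℝ} {c : Fin d → ℝ} {S : Finset (Fin d)}
    (hA : A.rank = m) {μ u : Fin m → ℝ}
    (hp : ∀ t : ℝ, 0 ≤ t → μ + t • u ∈ DS A c S)
    (hn : ∀ t : ℝ, 0 ≤ t → μ + t • (-u) ∈ DS A c S) : u = 0 := by
  have key : Aᵀ *ᵥ u = 0 := by
    funext j
    by_contra hj
    have habs : 0 < |(Aᵀ *ᵥ u) j| := abs_pos.mpr hj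
    set t := (c j - (Aᵀ *ᵥ μ) j + 1) / |(Aᵀ *ᵥ u) j| with ht
    have hslack : 0 ≤ c j - (Aᵀ *ᵥ μ) j := by
      have := (hp 0 le_rfl).1 j
      simp only [zero_smul, add_zero] at this
      linarith
    have htpos : 0 ≤ t := div_nonneg (by linarith) habs.le
    have h1 := (hp t htpos).1 j
    have h2 := (hn t htpos).1 j
    rw [mulVec_line] at h1 h2
    have hmul : t * |(Aᵀ *ᵥ u) j| = c j - (Aᵀ *ᵥ μ) j + 1 := by
      rw [ht, div_mul_cancel₀ _ habs.ne']
    rcases abs_cases ((Aᵀ *ᵥ u) j) with ⟨he, _⟩ | ⟨he, _⟩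
    · rw [he] at hmul; linarith
    · rw [he] at hmul
      have h2' : (Aᵀ *ᵥ μ) j + t * (Aᵀ *ᵥ (-u)) j ≤ c j := h2
      have : (Aᵀ *ᵥ (-u)) j = -((Aᵀ *ᵥ u) j) := by
        rw [mulVec_neg]; simp
      rw [this] at h2'
      nlinarith
  exact transp_inj hA key

/-- pivoting towards a dual vertex not decreasing the objective -/
lemma pivot {A : Matrix (Fin m) (Fin d) ℝ} {c : Fin d → ℝ} (hA : A.rank = m)
    (S : Finset (Fin d)) (btil : Fin m → ℝ) (B0 : ℝ)
    (hbound : ∀ μ ∈ DS A c S, btil ⬝ᵥ μ ≤ B0) :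
    ∀ (n : ℕ) (μ : Fin m → ℝ), μ ∈ DS A c S → d ≤ (Zact A c μ).card + n →
    ∃ μ', μ' ∈ DS A c S ∧ fullRk A c μ' ∧ btil ⬝ᵥ μ ≤ btil ⬝ᵥ μ' := by
  intro n
  induction n with
  | zero =>
    intro μ hμ hcard
    refine ⟨μ, hμ, ?_, le_rfl⟩
    have hZ : Zact A c μ = Finset.univ := by
      apply Finset.eq_univ_of_card
      have := (Zact A c μ).card_le_univ
      simp only [Finset.card_univ, Fintype.card_fin] at *
      omega
    intro u hu
    apply transp_inj hA
    funext j
    have : j ∈ Zact A c μ := hZ ▸ Finset.mem_univ j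
    simpa using hu j this
  | succ n ih =>
    intro μ hμ hcard
    by_cases hfull : fullRk A c μ
    · exact ⟨μ, hμ, hfull, le_rfl⟩
    · rw [fullRk] at hfull
      push_neg at hfull
      obtain ⟨u0, hu0, hu0ne⟩ := hfull
      -- choose direction with nonneg objective
      have hcases : ∃ u : Fin m → ℝ, u ≠ 0 ∧ (∀ j ∈ Zact A c μ, (Aᵀ *ᵥ u) j = 0) ∧
          0 ≤ btil ⬝ᵥ u := by
        by_cases h : 0 ≤ btil ⬝ᵥ u0
        · exact ⟨u0, hu0ne, hu0, h⟩
        · refine ⟨-u0, neg_ne_zero.mpr hu0ne, ?_, ?_⟩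
          · intro j hj
            rw [mulVec_neg]
            simp [hu0 j hj]
          · rw [dotProduct_neg]
            linarith
      obtain ⟨u, hune, hu, hbu⟩ := hcases
      have step : ∃ μ₁, μ₁ ∈ DS A c S ∧ btil ⬝ᵥ μ ≤ btil ⬝ᵥ μ₁ ∧
          (Zact A c μ).card < (Zact A c μ₁).card := by
        rcases move hμ hu with hunb | ⟨t, htpos, hmem, j₂, hj₂, hj₂eq⟩
        · -- unbounded in direction u : objective must vanish, try -u
          have hbu0 : btil ⬝ᵥ u = 0 := by
            rcases lt_or_eq_of_le hbu with hlt | heq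
            · exfalso
              set t := (B0 - btil ⬝ᵥ μ) / (btil ⬝ᵥ u) + 1 with ht
              have hB : btil ⬝ᵥ μ ≤ B0 := hbound μ hμ
              have htpos : 0 ≤ t := by
                rw [ht]
                have : 0 ≤ (B0 - btil ⬝ᵥ μ) / (btil ⬝ᵥ u) := div_nonneg (by linarith) hlt.le
                linarith
              have := hbound _ (hunb t htpos)
              rw [dotProduct_add, dotProduct_smul] at this
              have hcalc : t * (btil ⬝ᵥ u) = (B0 - btil ⬝ᵥ μ) + (btil ⬝ᵥ u) := by
                rw [ht, add_mul, div_mul_cancel₀ _ hlt.ne', one_mul]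
              simp only [smul_eq_mul] at this
              rw [hcalc] at this
              linarith
            · exact heq.symm
          have hun : ∀ j ∈ Zact A c μ, (Aᵀ *ᵥ (-u)) j = 0 := by
            intro j hj
            rw [mulVec_neg]
            simp [hu j hj]
          rcases move hμ hun with hunb' | ⟨t, htpos, hmem, j₂, hj₂, hj₂eq⟩
          · exact absurd (unbounded_dir_zero hA hunb hunb') hune
          · refine ⟨μ + t • (-u), hmem, ?_, ?_⟩
            · rw [dotProduct_add, dotProduct_smul]
              simp only [smul_eq_mul, dotProduct_neg]
              rw [hbu0]
              simp
            · apply Finset.card_lt_card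
              rw [Finset.ssubset_iff_of_subset]
              · exact ⟨j₂, mem_Zact.mpr hj₂eq, hj₂⟩
              · intro j hj
                rw [mem_Zact, mulVec_line, hun j hj, mul_zero, add_zero]
                exact mem_Zact.mp hj
        · refine ⟨μ + t • u, hmem, ?_, ?_⟩
          · rw [dotProduct_add, dotProduct_smul]
            simp only [smul_eq_mul]
            nlinarith
          · apply Finset.card_lt_card
            rw [Finset.ssubset_iff_of_subset]
            · exact ⟨j₂, mem_Zact.mpr hj₂eq, hj₂⟩
            · intro j hj
              rw [mem_Zact, mulVec_line, hu j hj, mul_zero, add_zero]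
              exact mem_Zact.mp hj
      obtain ⟨μ₁, hμ₁, hobj, hcard₁⟩ := step
      obtain ⟨μ', hμ', hfull', hobj'⟩ := ih μ₁ hμ₁ (by omega)
      exact ⟨μ', hμ', hfull', le_trans hobj hobj'⟩

/-- the set of dual vertices is finite -/
lemma vert_finite (A : Matrix (Fin m) (Fin d) ℝ) (c : Fin d → ℝ) (S : Finset (Fin d)) :
    Set.Finite {μ | μ ∈ DS A c S ∧ fullRk A c μ} := by
  rw [← Set.finite_coe_iff]
  apply Finite.of_injective (fun μ : {μ | μ ∈ DS A c S ∧ fullRk A c μ} => Zact A c μ.1)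
  rintro ⟨μ, hμDS, hμfull⟩ ⟨ν, hνDS, hνfull⟩ h
  simp only at h
  have : μ - ν = 0 := by
    apply hμfull
    intro j hj
    have hjν : j ∈ Zact A c ν := h ▸ hj
    rw [mulVec_sub]
    simp [mem_Zact.mp hj, mem_Zact.mp hjν]
  ext1
  simp only
  have := sub_eq_zero.mp this
  exact this



/-! ### basic solution characterizations -/

lemma mulVec_restrict (A : Matrix (Fin m) (Fin d) ℝ) {e : Fin m → Fin d}
    (he : Function.Injective e) {x : Fin d → ℝ}
    (hx : ∀ i, x i ≠ 0 → i ∈ Finset.univ.image e) :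
    A *ᵥ x = subMat A e *ᵥ (x ∘ e) := by
  funext i
  rw [mulVec, mulVec, dotProduct, dotProduct]
  rw [← Finset.sum_subset (Finset.univ.image e).subset_univ
    (fun j _ hj => by
      have : x j = 0 := by by_contra h; exact hj (hx j h)
      rw [this, mul_zero])]
  rw [Finset.sum_image (fun a _ b _ h => he h)]
  rfl

lemma basicSol_support (A : Matrix (Fin m) (Fin d) ℝ) (e : Fin m → Fin d) (v : Fin m → ℝ)
    {i : Fin d} (hi : i ∉ Finset.univ.image e) : basicSol A e v i = 0 := by
  rw [basicSol]
  apply Finset.sum_eq_zero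
  intro j _
  rw [if_neg]
  intro h
  exact hi (Finset.mem_image.mpr ⟨j, Finset.mem_univ j, h⟩)

lemma basicSol_comp (A : Matrix (Fin m) (Fin d) ℝ) {e : Fin m → Fin d}
    (he : Function.Injective e) (v : Fin m → ℝ) (k : Fin m) :
    basicSol A e v (e k) = ((subMat A e)⁻¹ *ᵥ v) k := by
  rw [basicSol]
  rw [Finset.sum_eq_single k]
  · rw [if_pos rfl]
  · intro j _ hj
    rw [if_neg (fun h => hj (he h))]
  · intro h; exact absurd (Finset.mem_univ _) h

lemma mulVec_basicSol {A : Matrix (Fin m) (Fin d) ℝ} {e : Fin m → Fin d}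
    (hb : IsBasis A e) (v : Fin m → ℝ) : A *ᵥ basicSol A e v = v := by
  have he := hb.1.injective
  rw [mulVec_restrict A he (fun i hi => by
    by_contra h
    exact hi (basicSol_support A e v h))]
  have : basicSol A e v ∘ e = (subMat A e)⁻¹ *ᵥ v := by
    funext k
    exact basicSol_comp A he v k
  rw [this, mulVec_mulVec, Matrix.mul_nonsing_inv _ hb.2, one_mulVec]

lemma basicSol_unique {A : Matrix (Fin m) (Fin d) ℝ} {e : Fin m → Fin d}
    (hb : IsBasis A e) (v : Fin m → ℝ) {x : Fin d → ℝ}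
    (hsupp : ∀ i, x i ≠ 0 → i ∈ Finset.univ.image e) (hx : A *ᵥ x = v) :
    x = basicSol A e v := by
  have he := hb.1.injective
  have h1 : subMat A e *ᵥ (x ∘ e) = v := by rw [← mulVec_restrict A he hsupp, hx]
  have h2 : x ∘ e = (subMat A e)⁻¹ *ᵥ v := by
    rw [← h1, mulVec_mulVec, Matrix.nonsing_inv_mul _ hb.2, one_mulVec]
  funext i
  by_cases hi : i ∈ Finset.univ.image e
  · obtain ⟨k, _, rfl⟩ := Finset.mem_image.mp hi
    rw [basicSol_comp A he v k, ← h2]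
    rfl
  · rw [basicSol_support A e v hi]
    by_contra h
    exact hi (hsupp i h)

lemma transp_subMat_apply (A : Matrix (Fin m) (Fin d) ℝ) (e : Fin m → Fin d)
    (μ : Fin m → ℝ) (k : Fin m) : ((subMat A e)ᵀ *ᵥ μ) k = (Aᵀ *ᵥ μ) (e k) := by
  rw [mulVec, mulVec, dotProduct, dotProduct]
  rfl

lemma dualSol_eq {A : Matrix (Fin m) (Fin d) ℝ} {c : Fin d → ℝ} {e : Fin m → Fin d}
    (hb : IsBasis A e) {μ : Fin m → ℝ}
    (hμ : ∀ k, (Aᵀ *ᵥ μ) (e k) = c (e k)) : dualSol A c e = μ := by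
  have hdet : IsUnit ((subMat A e)ᵀ).det := by
    rw [Matrix.det_transpose]; exact hb.2
  have h1 : (subMat A e)ᵀ *ᵥ μ = fun k => c (e k) := by
    funext k
    rw [transp_subMat_apply]
    exact hμ k
  rw [dualSol, ← h1, mulVec_mulVec, Matrix.nonsing_inv_mul _ hdet, one_mulVec]

lemma dualSol_active {A : Matrix (Fin m) (Fin d) ℝ} {c : Fin d → ℝ} {e : Fin m → Fin d}
    (hb : IsBasis A e) (k : Fin m) : (Aᵀ *ᵥ dualSol A c e) (e k) = c (e k) := by
  have hdet : IsUnit ((subMat A e)ᵀ).det := by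
    rw [Matrix.det_transpose]; exact hb.2
  rw [← transp_subMat_apply, dualSol, mulVec_mulVec, Matrix.mul_nonsing_inv _ hdet, one_mulVec]

/-! ### independence of columns -/

lemma indepOn_of_basis {A : Matrix (Fin m) (Fin d) ℝ} {e : Fin m → Fin d}
    (hb : IsBasis A e) : IndepOn (colA A) (Finset.univ.image e) := by
  intro l hl hsum
  rw [← mulVec_eq_sum] at hsum
  have he := hb.1.injective
  have h1 : subMat A e *ᵥ (l ∘ e) = 0 := by rw [← mulVec_restrict A he hl, hsum]
  have h2 : l ∘ e = 0 := by
    have := congrArg (fun w => (subMat A e)⁻¹ *ᵥ w) h1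
    simpa [mulVec_mulVec, Matrix.nonsing_inv_mul _ hb.2, one_mulVec] using this
  funext i
  by_cases hi : i ∈ Finset.univ.image e
  · obtain ⟨k, _, rfl⟩ := Finset.mem_image.mp hi
    exact congrFun h2 k
  · by_contra h
    exact hi (hl i h)

lemma isBasis_of_indep {A : Matrix (Fin m) (Fin d) ℝ} {J : Finset (Fin d)}
    (hcard : J.card = m) (hind : IndepOn (colA A) J) :
    IsBasis A (J.orderEmbOfFin hcard) := by
  refine ⟨(J.orderEmbOfFin hcard).strictMono, ?_⟩
  rw [← Matrix.isUnit_iff_isUnit_det]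
  rw [← Matrix.linearIndependent_cols_iff_isUnit]
  have hli : LinearIndependent ℝ (fun t : {x // x ∈ J} => colA A t) := (indepOn_iff _ J).mp hind
  have hinj : Function.Injective (fun k : Fin m => (⟨J.orderEmbOfFin hcard k,
      J.orderEmbOfFin_mem hcard k⟩ : {x // x ∈ J})) := by
    intro a b h
    exact (J.orderEmbOfFin hcard).injective (congrArg Subtype.val h)
  exact hli.comp _ hinj

lemma image_orderEmbOfFin {J : Finset (Fin d)} (hcard : J.card = m) :
    Finset.univ.image (J.orderEmbOfFin hcard) = J := by
  apply Finset.eq_of_subset_of_card_le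
  · intro j hj
    obtain ⟨k, _, rfl⟩ := Finset.mem_image.mp hj
    exact J.orderEmbOfFin_mem hcard k
  · rw [hcard]
    rw [Finset.card_image_of_injective _ (J.orderEmbOfFin hcard).injective]
    simp

/-- extension of an independent set of columns to a basis inside a full-rank set -/
lemma extend_basis {A : Matrix (Fin m) (Fin d) ℝ} (Z : Finset (Fin d))
    (hfull : ∀ u : Fin m → ℝ, (∀ j ∈ Z, (Aᵀ *ᵥ u) j = 0) → u = 0) :
    ∀ (n : ℕ) (F : Finset (Fin d)), F ⊆ Z → IndepOn (colA A) F → m ≤ F.card + n →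
    ∃ J : Finset (Fin d), F ⊆ J ∧ J ⊆ Z ∧ J.card = m ∧ IndepOn (colA A) J := by
  intro n
  induction n with
  | zero =>
    intro F hFZ hind hcard
    have hle : F.card ≤ m := by
      have hli : LinearIndependent ℝ (fun t : {x // x ∈ F} => colA A t) := (indepOn_iff _ F).mp hind
      have := hli.fintype_card_le_finrank
      rw [Module.finrank_fin_fun ℝ] at this
      simpa [Fintype.card_coe] using this
    exact ⟨F, Finset.Subset.refl F, hFZ, by omega, hind⟩
  | succ n ih =>
    intro F hFZ hind hcard
    by_cases hcm : F.card = m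
    · exact ⟨F, Finset.Subset.refl F, hFZ, hcm, hind⟩
    · have hlt : F.card < m := by
        have hle : F.card ≤ m := by
          have hli : LinearIndependent ℝ (fun t : {x // x ∈ F} => colA A t) :=
            (indepOn_iff _ F).mp hind
          have := hli.fintype_card_le_finrank
          rw [Module.finrank_fin_fun ℝ] at this
          simpa [Fintype.card_coe] using this
        omega
      -- find u ≠ 0 orthogonal to columns of F
      set Ψ : (Fin m → ℝ) →ₗ[ℝ] ({x // x ∈ F} → ℝ) :=
        { toFun := fun u => fun t => (Aᵀ *ᵥ u) t.1
          map_add' := by intro x y; funext t; simp [mulVec_add]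
          map_smul' := by intro s x; funext t; simp [mulVec_smul] } with hΨ
      have hker : LinearMap.ker Ψ ≠ ⊥ := by
        intro hbot
        have h1 := Ψ.finrank_range_add_finrank_ker
        rw [hbot, finrank_bot, add_zero] at h1
        have h2 : Module.finrank ℝ (LinearMap.range Ψ) ≤ Module.finrank ℝ ({x // x ∈ F} → ℝ) :=
          Submodule.finrank_le _
      -- codomain has finrank F.card
        have h3 : Module.finrank ℝ ({x // x ∈ F} → ℝ) = F.card := by
          rw [Module.finrank_pi]
          exact Fintype.card_coe F
        rw [Module.finrank_fin_fun ℝ] at h1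
        omega
      obtain ⟨u, huker, hune⟩ := Submodule.exists_mem_ne_zero_of_ne_bot hker
      have huF : ∀ j ∈ F, (Aᵀ *ᵥ u) j = 0 := by
        intro j hj
        have := LinearMap.mem_ker.mp huker
        have := congrFun this ⟨j, hj⟩
        exact this
      have hexj : ∃ j₀ ∈ Z, (Aᵀ *ᵥ u) j₀ ≠ 0 := by
        by_contra h
        push_neg at h
        exact hune (hfull u h)
      obtain ⟨j₀, hj₀Z, hj₀ne⟩ := hexj
      have hj₀F : j₀ ∉ F := fun h => hj₀ne (huF j₀ h)
      have hins : IndepOn (colA A) (insert j₀ F) := by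
        intro l hl hsum
        rw [← mulVec_eq_sum] at hsum
        have hdot : (Aᵀ *ᵥ u) ⬝ᵥ l = 0 := by
          calc (Aᵀ *ᵥ u) ⬝ᵥ l = (u ᵥ* A) ⬝ᵥ l := by rw [mulVec_transpose]
          _ = u ⬝ᵥ (A *ᵥ l) := (dotProduct_mulVec u A l).symm
          _ = 0 := by rw [hsum]; simp
        have hl0 : l j₀ = 0 := by
          rw [dotProduct] at hdot
          rw [Finset.sum_eq_single j₀] at hdot
          · exact (mul_eq_zero.mp hdot).resolve_left hj₀ne
          · intro j _ hj
            by_cases hjF : j ∈ F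
            · rw [huF j hjF, zero_mul]
            · have : l j = 0 := by
                by_contra h
                rcases Finset.mem_insert.mp (hl j h) with h1 | h1
                · exact hj h1
                · exact hjF h1
              rw [this, mul_zero]
          · intro h; exact absurd (Finset.mem_univ _) h
        apply hind l
        · intro i hi
          rcases Finset.mem_insert.mp (hl i hi) with h1 | h1
          · exact absurd (h1 ▸ hl0) hi
          · exact h1
        · rw [← mulVec_eq_sum]; exact hsum
      obtain ⟨J, hFJ, hJZ, hJcard, hJind⟩ := ih (insert j₀ F)
        (Finset.insert_subset hj₀Z hFZ) hins
        (by rw [Finset.card_insert_of_notMem hj₀F]; omega)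
      exact ⟨J, (Finset.subset_insert j₀ F).trans hFJ, hJZ, hJcard, hJind⟩



/-- support reduction keeping a sign-free part `S` -/
lemma reduce_free {A : Matrix (Fin m) (Fin d) ℝ} {S : Finset (Fin d)}
    (hSind : IndepOn (colA A) S) {Z : Finset (Fin d)} :
    ∀ (T : Finset (Fin d)), T ⊆ Z → ∀ w : Fin d → ℝ,
      (∀ j, w j ≠ 0 → j ∈ S ∪ T) → (∀ j ∉ S, 0 ≤ w j) →
    ∃ (T' : Finset (Fin d)) (w' : Fin d → ℝ), T' ⊆ Z ∧ IndepOn (colA A) (S ∪ T') ∧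
      (∀ j, w' j ≠ 0 → j ∈ S ∪ T') ∧ (∀ j ∉ S, 0 ≤ w' j) ∧ A *ᵥ w' = A *ᵥ w := by
  classical
  intro T
  induction T using Finset.strongInduction with
  | _ T ih =>
    intro hTZ w hwsupp hwpos
    by_cases hshrink : ∃ j ∈ T, j ∈ S ∨ w j = 0
    · obtain ⟨j, hjT, hj⟩ := hshrink
      have hsupp' : ∀ i, w i ≠ 0 → i ∈ S ∪ T.erase j := by
        intro i hi
        rcases Finset.mem_union.mp (hwsupp i hi) with h | h
        · exact Finset.mem_union_left _ h
        · by_cases hij : i = j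
          · rcases hj with hj | hj
            · exact Finset.mem_union_left _ (hij ▸ hj)
            · exact absurd (hij ▸ hj) hi
          · exact Finset.mem_union_right _ (Finset.mem_erase.mpr ⟨hij, h⟩)
      exact ih (T.erase j) (Finset.erase_ssubset hjT)
        ((Finset.erase_subset _ _).trans hTZ) w hsupp' hwpos
    · push_neg at hshrink
      have hTpos : ∀ j ∈ T, j ∉ S ∧ 0 < w j := by
        intro j hj
        have h1 := (hshrink j hj).1
        have h2 := (hshrink j hj).2
        exact ⟨h1, lt_of_le_of_ne (hwpos j h1) (Ne.symm h2)⟩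
      by_cases hind : IndepOn (colA A) (S ∪ T)
      · exact ⟨T, w, hTZ, hind, hwsupp, hwpos, rfl⟩
      · rw [IndepOn] at hind
        push_neg at hind
        obtain ⟨l, hlsupp, hlsum, hlne⟩ := hind
        have hlT : ∃ j ∈ T, l j ≠ 0 := by
          by_contra h
          push_neg at h
          apply hlne
          apply hSind l ?_ hlsum
          intro i hi
          rcases Finset.mem_union.mp (hlsupp i hi) with h1 | h1
          · exact h1
          · exact absurd (h i h1) hi
        have hex : ∃ l' : Fin d → ℝ, (∀ i, l' i ≠ 0 → i ∈ S ∪ T) ∧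
            (∑ i, l' i • colA A i = 0) ∧ ∃ j ∈ T, 0 < l' j := by
          obtain ⟨j₁, hj₁T, hj₁⟩ := hlT
          rcases lt_or_gt_of_ne hj₁ with hneg | hpos
          · refine ⟨-l, fun i hi => hlsupp i (by simpa using hi), by simpa using hlsum,
              j₁, hj₁T, by simpa using hneg⟩
          · exact ⟨l, hlsupp, hlsum, j₁, hj₁T, hpos⟩
        obtain ⟨l', hl'supp, hl'sum, j₁, hj₁T, hj₁pos⟩ := hex
        set Q := T.filter (fun j => 0 < l' j) with hQ
        have hQne : Q.Nonempty := ⟨j₁, Finset.mem_filter.mpr ⟨hj₁T, hj₁pos⟩⟩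
        set t := Q.inf' hQne (fun j => w j / l' j) with ht
        obtain ⟨j₂, hj₂Q, hj₂⟩ := Finset.exists_mem_eq_inf' hQne (fun j => w j / l' j)
        have hj₂T : j₂ ∈ T := (Finset.mem_filter.mp hj₂Q).1
        have hj₂pos : 0 < l' j₂ := (Finset.mem_filter.mp hj₂Q).2
        have htpos : 0 < t := by
          rw [ht, Finset.lt_inf'_iff]
          intro j hj
          exact div_pos (hTpos j (Finset.mem_filter.mp hj).1).2 (Finset.mem_filter.mp hj).2
        set w' := fun i => w i - t * l' i with hw'
        have hw'pos : ∀ j ∉ S, 0 ≤ w' j := by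
          intro i hiS
          by_cases hi : 0 < l' i
          · have hiT : i ∈ T := by
              rcases Finset.mem_union.mp (hl'supp i hi.ne') with h | h
              · exact absurd h hiS
              · exact h
            have hiQ : i ∈ Q := Finset.mem_filter.mpr ⟨hiT, hi⟩
            have hle : t ≤ w i / l' i := by rw [ht]; exact Finset.inf'_le _ hiQ
            have := (le_div_iff₀ hi).mp hle
            simp only [hw']; linarith
          · push_neg at hi
            have : t * l' i ≤ 0 := mul_nonpos_of_nonneg_of_nonpos htpos.le hi
            simp only [hw']
            have := hwpos i hiS
            linarith
        have hw'j₂ : w' j₂ = 0 := by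
          have : t = w j₂ / l' j₂ := hj₂
          simp only [hw', this]
          field_simp
          ring
        have hw'supp : ∀ i, w' i ≠ 0 → i ∈ S ∪ T.erase j₂ := by
          intro i hi
          have himem : i ∈ S ∪ T := by
            by_contra h
            have h1 : w i = 0 := by
              by_contra hh; exact h (hwsupp i hh)
            have h2 : l' i = 0 := by
              by_contra hh; exact h (hl'supp i hh)
            exact hi (by simp [hw', h1, h2])
          rcases Finset.mem_union.mp himem with h | h
          · exact Finset.mem_union_left _ h
          · by_cases hij : i = j₂
            · exact absurd (by rw [hij]; exact hw'j₂ : w' i = 0) hi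
            · exact Finset.mem_union_right _ (Finset.mem_erase.mpr ⟨hij, h⟩)
        have hsum' : A *ᵥ w' = A *ᵥ w := by
          rw [mulVec_eq_sum, mulVec_eq_sum]
          simp only [hw', sub_smul, Finset.sum_sub_distrib, mul_smul]
          rw [← Finset.smul_sum, hl'sum]
          simp
        obtain ⟨T', w'', hT'Z, hind', hsupp'', hpos'', hsum''⟩ :=
          ih (T.erase j₂) (Finset.erase_ssubset hj₂T)
            ((Finset.erase_subset _ _).trans hTZ) w' hw'supp hw'pos
        exact ⟨T', w'', hT'Z, hind', hsupp'', hpos'', by rw [hsum'', hsum']⟩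



/-! ### cone properties and the mixed cone bridge -/

lemma coneGen_convex {V : Type*} [NormedAddCommGroup V] [NormedSpace ℝ V]
    {ι : Type*} [Fintype ι] (g : ι → V) :
    Convex ℝ {v | ∃ w : ι → ℝ, (∀ i, 0 ≤ w i) ∧ ∑ i, w i • g i = v} := by
  rintro x ⟨wx, hwx0, hwx⟩ y ⟨wy, hwy0, hwy⟩ a b ha hb hab
  refine ⟨fun i => a * wx i + b * wy i, ?_, ?_⟩
  · intro i
    have := hwx0 i; have := hwy0 i
    positivity
  · rw [← hwx, ← hwy]
    rw [Finset.smul_sum, Finset.smul_sum, ← Finset.sum_add_distrib]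
    refine Finset.sum_congr rfl fun i _ => ?_
    rw [add_smul, mul_smul, mul_smul]

lemma coneGen_smul_mem {V : Type*} [NormedAddCommGroup V] [NormedSpace ℝ V]
    {ι : Type*} [Fintype ι] (g : ι → V) :
    ∀ v ∈ {v | ∃ w : ι → ℝ, (∀ i, 0 ≤ w i) ∧ ∑ i, w i • g i = v}, ∀ t : ℝ, 0 ≤ t →
      t • v ∈ {v | ∃ w : ι → ℝ, (∀ i, 0 ≤ w i) ∧ ∑ i, w i • g i = v} := by
  rintro v ⟨w, hw0, hw⟩ t ht
  refine ⟨fun i => t * w i, fun i => mul_nonneg ht (hw0 i), ?_⟩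
  rw [← hw, Finset.smul_sum]
  refine Finset.sum_congr rfl fun i _ => ?_
  rw [mul_smul]

lemma coneGen_zero_mem {V : Type*} [NormedAddCommGroup V] [NormedSpace ℝ V]
    {ι : Type*} [Fintype ι] (g : ι → V) :
    (0 : V) ∈ {v | ∃ w : ι → ℝ, (∀ i, 0 ≤ w i) ∧ ∑ i, w i • g i = v} :=
  ⟨0, fun i => le_rfl, by simp⟩

/-- the mixed cone (nonneg coefficients on `Zs`, sign-free on `S ⊆ Zs`) as a `coneGen` set -/
lemma mixed_cone_eq {A : Matrix (Fin m) (Fin d) ℝ} {Zs S : Finset (Fin d)} (hSZ : S ⊆ Zs) :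
    {v : Fin m → ℝ | ∃ hcoef : ({x // x ∈ Zs} ⊕ {x // x ∈ S}) → ℝ, (∀ i, 0 ≤ hcoef i) ∧
      ∑ i, hcoef i • (Sum.elim (fun t : {x // x ∈ Zs} => colA A t.1)
        (fun t : {x // x ∈ S} => -colA A t.1)) i = v}
    = {v | ∃ w : Fin d → ℝ, (∀ j, w j ≠ 0 → j ∈ Zs) ∧ (∀ j ∉ S, 0 ≤ w j) ∧ A *ᵥ w = v} := by
  classical
  ext v
  constructor
  · rintro ⟨hw, hhw0, hhwsum⟩
    set w1 : Fin d → ℝ := fun j => if h : j ∈ Zs then hw (Sum.inl ⟨j, h⟩) else 0 with hw1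
    set w2 : Fin d → ℝ := fun j => if h : j ∈ S then hw (Sum.inr ⟨j, h⟩) else 0 with hw2
    have hw1nn : ∀ j, 0 ≤ w1 j := by
      intro j
      by_cases h : j ∈ Zs
      · simp only [hw1, dif_pos h]; exact hhw0 _
      · simp [hw1, h]
    refine ⟨fun j => w1 j - w2 j, ?_, ?_, ?_⟩
    · intro j hj
      by_contra hjZ
      have hjS : j ∉ S := fun h => hjZ (hSZ h)
      simp [hw1, hw2, hjZ, hjS] at hj
    · intro j hjS
      have h0 : w2 j = 0 := by simp [hw2, hjS]
      show 0 ≤ w1 j - w2 j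
      rw [h0, sub_zero]
      exact hw1nn j
    · have h1 : ∑ j, w1 j • colA A j = ∑ t : {x // x ∈ Zs}, hw (Sum.inl t) • colA A t.1 := by
        rw [sum_support_subset (colA A) (T := Zs)
          (fun j hj => by by_contra h; simp [hw1, h] at hj)]
        rw [← Finset.sum_coe_sort Zs (fun j => w1 j • colA A j)]
        refine Finset.sum_congr rfl fun t _ => ?_
        simp [hw1, t.2]
      have h2 : ∑ j, w2 j • colA A j = ∑ t : {x // x ∈ S}, hw (Sum.inr t) • colA A t.1 := by
        rw [sum_support_subset (colA A) (T := S)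
          (fun j hj => by by_contra h; simp [hw2, h] at hj)]
        rw [← Finset.sum_coe_sort S (fun j => w2 j • colA A j)]
        refine Finset.sum_congr rfl fun t _ => ?_
        simp [hw2, t.2]
      calc A *ᵥ (fun j => w1 j - w2 j)
          = ∑ j, (w1 j - w2 j) • colA A j := mulVec_eq_sum A _
        _ = (∑ j, w1 j • colA A j) - ∑ j, w2 j • colA A j := by
            simp only [sub_smul]; rw [Finset.sum_sub_distrib]
        _ = (∑ t : {x // x ∈ Zs}, hw (Sum.inl t) • colA A t.1)
            - ∑ t : {x // x ∈ S}, hw (Sum.inr t) • colA A t.1 := by rw [h1, h2]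
        _ = ∑ i, hw i • (Sum.elim (fun t : {x // x ∈ Zs} => colA A t.1)
              (fun t : {x // x ∈ S} => -colA A t.1)) i := by
            rw [Fintype.sum_sum_type]
            simp [smul_neg, sub_eq_add_neg]
        _ = v := hhwsum
  · rintro ⟨w, hwsupp, hwpos, hwA⟩
    refine ⟨Sum.elim (fun t => max (w t.1) 0) (fun t => max (-(w t.1)) 0), ?_, ?_⟩
    · rintro (t | t) <;> simp
    · have hS2Z : ∑ j ∈ S, max (-(w j)) 0 • colA A j
          = ∑ j ∈ Zs, (if j ∈ S then max (-(w j)) 0 else 0) • colA A j := by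
        rw [← Finset.sum_subset hSZ (fun j _ hj => by rw [if_neg hj, zero_smul])]
        refine Finset.sum_congr rfl fun j hj => ?_
        rw [if_pos hj]
      calc ∑ i, (Sum.elim (fun t : {x // x ∈ Zs} => max (w t.1) 0)
              (fun t : {x // x ∈ S} => max (-(w t.1)) 0)) i
            • (Sum.elim (fun t : {x // x ∈ Zs} => colA A t.1)
              (fun t : {x // x ∈ S} => -colA A t.1)) i
          = (∑ t : {x // x ∈ Zs}, max (w t.1) 0 • colA A t.1)
            + ∑ t : {x // x ∈ S}, max (-(w t.1)) 0 • (-colA A t.1) := by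
            rw [Fintype.sum_sum_type]
            simp
        _ = (∑ j ∈ Zs, max (w j) 0 • colA A j) - ∑ j ∈ S, max (-(w j)) 0 • colA A j := by
            rw [Finset.sum_coe_sort Zs (fun j => max (w j) 0 • colA A j)]
            simp only [smul_neg]
            rw [Finset.sum_neg_distrib, sub_eq_add_neg]
            congr 1
            · congr 1
              rw [Finset.sum_coe_sort S (fun j => max (-(w j)) 0 • colA A j)]
        _ = ∑ j ∈ Zs, (max (w j) 0 - (if j ∈ S then max (-(w j)) 0 else 0)) • colA A j := by
            rw [hS2Z]
            simp only [sub_smul]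
            rw [Finset.sum_sub_distrib]
        _ = ∑ j ∈ Zs, w j • colA A j := by
            refine Finset.sum_congr rfl fun j hj => ?_
            by_cases hjS : j ∈ S
            · rw [if_pos hjS, max_zero_sub_max_neg_zero_eq_self]
            · rw [if_neg hjS, sub_zero, max_eq_left (hwpos j hjS)]
        _ = ∑ j, w j • colA A j := (sum_support_subset (colA A) hwsupp).symm
        _ = A *ᵥ w := (mulVec_eq_sum A w).symm
        _ = v := hwA



/-- core lemma: for a fixed primal&dual feasible basis, nearby feasible `btil`
have an optimal basic solution coming from the same equivalence class. -/
lemma main_core {A : Matrix (Fin m) (Fin d) ℝ} (hA : A.rank = m) (b : Fin m → ℝ)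
    (c : Fin d → ℝ) (e : Fin m → Fin d)
    (hP : PrimalFeasibleBasis A b e) (hD : DualFeasibleBasis A c e) :
    ∃ ε : ℝ, 0 < ε ∧ ∀ btil : Fin m → ℝ,
      (feasSet A btil).Nonempty → ‖btil - b‖ < ε →
      ∃ e' : Fin m → Fin d,
        PrimalFeasibleBasis A b e' ∧ DualFeasibleBasis A c e' ∧
        basicSol A e' b = basicSol A e b ∧
        basicSol A e' btil ∈ optSet A btil c := by
  classical
  set xs : Fin d → ℝ := basicSol A e b with hxs
  set S : Finset (Fin d) := Finset.univ.filter (fun j => xs j ≠ 0) with hS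
  have hxsupp : ∀ j, xs j ≠ 0 → j ∈ S := fun j hj => Finset.mem_filter.mpr ⟨Finset.mem_univ j, hj⟩
  have hSim : S ⊆ Finset.univ.image e := by
    intro j hj
    have := (Finset.mem_filter.mp hj).2
    by_contra h
    exact this (basicSol_support A e b h)
  have hSind : IndepOn (colA A) S := (indepOn_of_basis hP.1).mono hSim
  have hAxs : A *ᵥ xs = b := mulVec_basicSol hP.1 b
  set δ : ℝ := if hSne : S.Nonempty then S.inf' hSne xs else 1 with hδ
  have hδpos : 0 < δ := by
    rw [hδ]
    split_ifs with hSne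
    · rw [Finset.lt_inf'_iff]
      intro j hj
      have h1 := hP.2 j
      have h2 := (Finset.mem_filter.mp hj).2
      exact lt_of_le_of_ne h1 (Ne.symm h2)
    · exact one_pos
  have hδle : ∀ j ∈ S, δ ≤ xs j := by
    intro j hj
    rw [hδ, dif_pos ⟨j, hj⟩]
    exact Finset.inf'_le _ hj
  set gF : Finset (Fin d) → ℝ := fun F =>
    if h : IndepOn (colA A) F then
      δ / (‖Classical.choose (exists_coord (colA A) F h)‖ + 1) else 1 with hgF
  have hgFpos : ∀ F, 0 < gF F := by
    intro F
    simp only [hgF]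
    split_ifs with h
    · apply div_pos hδpos
      positivity
    · exact one_pos
  have hune : (Finset.univ : Finset (Finset (Fin d))).Nonempty := ⟨∅, Finset.mem_univ ∅⟩
  refine ⟨Finset.univ.inf' hune gF, by rw [Finset.lt_inf'_iff]; exact fun F _ => hgFpos F, ?_⟩
  intro btil hfeas hnorm
  obtain ⟨xt, hxtA, hxtpos⟩ := hfeas
  have hlam : dualSol A c e ∈ DS A c S := by
    refine ⟨hD.2, ?_⟩
    intro j hj
    obtain ⟨k, _, rfl⟩ := Finset.mem_image.mp (hSim hj)
    exact dualSol_active hD.1 k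
  have hbound : ∀ μ ∈ DS A c S, btil ⬝ᵥ μ ≤ c ⬝ᵥ xt := by
    intro μ hμ
    have h1 : btil ⬝ᵥ μ = (Aᵀ *ᵥ μ) ⬝ᵥ xt := by
      rw [← hxtA, dotProduct_comm]
      calc μ ⬝ᵥ (A *ᵥ xt) = (μ ᵥ* A) ⬝ᵥ xt := dotProduct_mulVec μ A xt
      _ = (Aᵀ *ᵥ μ) ⬝ᵥ xt := by rw [mulVec_transpose]
    rw [h1, dotProduct, dotProduct]
    exact Finset.sum_le_sum fun j _ => mul_le_mul_of_nonneg_right (hμ.1 j) (hxtpos j)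
  obtain ⟨μ₀, hμ₀DS, hμ₀full, -⟩ := pivot hA S btil (c ⬝ᵥ xt) hbound d (dualSol A c e)
    hlam (by omega)
  have hfin := vert_finite A c S
  have hμ₀mem : μ₀ ∈ hfin.toFinset := hfin.mem_toFinset.mpr ⟨hμ₀DS, hμ₀full⟩
  obtain ⟨μs, hμsVF, hμsmax⟩ := Finset.exists_max_image hfin.toFinset (fun μ => btil ⬝ᵥ μ)
    ⟨μ₀, hμ₀mem⟩
  have hμsdata := hfin.mem_toFinset.mp hμsVF
  have hμsDS : μs ∈ DS A c S := hμsdata.1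
  have hμsfull : fullRk A c μs := hμsdata.2
  have hglob : ∀ μ ∈ DS A c S, btil ⬝ᵥ μ ≤ btil ⬝ᵥ μs := by
    intro μ hμ
    obtain ⟨μ', hμ'DS, hμ'full, hle⟩ := pivot hA S btil (c ⬝ᵥ xt) hbound d μ hμ (by omega)
    exact le_trans hle (hμsmax μ' (hfin.mem_toFinset.mpr ⟨hμ'DS, hμ'full⟩))
  set Zs := Zact A c μs with hZs
  have hSZ : S ⊆ Zs := S_sub_Zact hμsDS
  have hbW : btil ∈ {v : Fin m → ℝ | ∃ w : Fin d → ℝ,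
      (∀ j, w j ≠ 0 → j ∈ Zs) ∧ (∀ j ∉ S, 0 ≤ w j) ∧ A *ᵥ w = v} := by
    by_contra hbWn
    have hWeq := mixed_cone_eq (A := A) hSZ
    have hWcl : IsClosed {v : Fin m → ℝ | ∃ w : Fin d → ℝ,
        (∀ j, w j ≠ 0 → j ∈ Zs) ∧ (∀ j ∉ S, 0 ≤ w j) ∧ A *ᵥ w = v} := by
      rw [← hWeq]; exact coneGen_isClosed _
    have hWcv : Convex ℝ {v : Fin m → ℝ | ∃ w : Fin d → ℝ,
        (∀ j, w j ≠ 0 → j ∈ Zs) ∧ (∀ j ∉ S, 0 ≤ w j) ∧ A *ᵥ w = v} := by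
      rw [← hWeq]; exact coneGen_convex _
    have hWsm : ∀ v ∈ {v : Fin m → ℝ | ∃ w : Fin d → ℝ,
        (∀ j, w j ≠ 0 → j ∈ Zs) ∧ (∀ j ∉ S, 0 ≤ w j) ∧ A *ᵥ w = v}, ∀ t : ℝ, 0 ≤ t →
        t • v ∈ {v : Fin m → ℝ | ∃ w : Fin d → ℝ,
        (∀ j, w j ≠ 0 → j ∈ Zs) ∧ (∀ j ∉ S, 0 ≤ w j) ∧ A *ᵥ w = v} := by
      rw [← hWeq]; exact coneGen_smul_mem _
    have hW0 : (0 : Fin m → ℝ) ∈ {v : Fin m → ℝ | ∃ w : Fin d → ℝ,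
        (∀ j, w j ≠ 0 → j ∈ Zs) ∧ (∀ j ∉ S, 0 ≤ w j) ∧ A *ᵥ w = v} := by
      rw [← hWeq]; exact coneGen_zero_mem _
    obtain ⟨u, hu1, hu2⟩ := exists_sep_vec hWcl hWcv hWsm hW0 hbWn
    have hcolmem : ∀ j ∈ Zs, colA A j ∈ {v : Fin m → ℝ | ∃ w : Fin d → ℝ,
        (∀ j, w j ≠ 0 → j ∈ Zs) ∧ (∀ j ∉ S, 0 ≤ w j) ∧ A *ᵥ w = v} := by
      intro j hj
      refine ⟨fun j' => if j' = j then 1 else 0, ?_, ?_, ?_⟩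
      · intro j' hj'
        by_cases h : j' = j
        · exact h ▸ hj
        · simp [h] at hj'
      · intro j' _
        show (0:ℝ) ≤ if j' = j then 1 else 0
        split_ifs
        exacts [zero_le_one, le_rfl]
      · rw [mulVec_eq_sum, Finset.sum_eq_single j]
        · simp
        · intro j' _ hj'
          simp [hj']
        · intro h; exact absurd (Finset.mem_univ _) h
    have hcolZ : ∀ j ∈ Zs, (Aᵀ *ᵥ u) j ≤ 0 := by
      intro j hj
      have hle := hu1 _ (hcolmem j hj)
      calc (Aᵀ *ᵥ u) j = colA A j ⬝ᵥ u := transp_mulVec_apply A u j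
      _ = u ⬝ᵥ colA A j := dotProduct_comm _ _
      _ ≤ 0 := hle
    have hcolS : ∀ j ∈ S, (Aᵀ *ᵥ u) j = 0 := by
      intro j hj
      have hle := hcolZ j (hSZ hj)
      have hmem : -colA A j ∈ {v : Fin m → ℝ | ∃ w : Fin d → ℝ,
          (∀ j, w j ≠ 0 → j ∈ Zs) ∧ (∀ j ∉ S, 0 ≤ w j) ∧ A *ᵥ w = v} := by
        refine ⟨fun j' => if j' = j then -1 else 0, ?_, ?_, ?_⟩
        · intro j' hj'
          by_cases h : j' = j
          · exact h ▸ hSZ hj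
          · simp [h] at hj'
        · intro j' hj'S
          show (0:ℝ) ≤ if j' = j then -1 else 0
          split_ifs with h
          · exact absurd (h ▸ hj) hj'S
          · exact le_rfl
        · rw [mulVec_eq_sum, Finset.sum_eq_single j]
          · simp
          · intro j' _ hj'
            simp [hj']
          · intro h; exact absurd (Finset.mem_univ _) h
      have hge := hu1 _ hmem
      rw [dotProduct_neg] at hge
      have : 0 ≤ u ⬝ᵥ colA A j := by linarith
      have heq : (Aᵀ *ᵥ u) j = u ⬝ᵥ colA A j := by
        rw [transp_mulVec_apply, dotProduct_comm]
      linarith [hle, heq ▸ this]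
    obtain ⟨t, htpos, htmem⟩ := move' hμsDS hcolZ hcolS
    have hcontra := hglob _ htmem
    rw [dotProduct_add, dotProduct_smul] at hcontra
    have hub : 0 < btil ⬝ᵥ u := by rw [dotProduct_comm]; exact hu2
    simp only [smul_eq_mul] at hcontra
    nlinarith
  obtain ⟨w₀, hw₀supp, hw₀pos, hw₀A⟩ := hbW
  obtain ⟨T', w', hT'Z, hFind, hw'supp, hw'pos, hw'A⟩ :=
    reduce_free hSind (Z := Zs) Zs (Finset.Subset.refl Zs) w₀
      (fun j hj => Finset.mem_union_right _ (hw₀supp j hj)) hw₀pos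
  rw [hw₀A] at hw'A
  have hFZ : S ∪ T' ⊆ Zs := Finset.union_subset hSZ hT'Z
  set L := Classical.choose (exists_coord (colA A) (S ∪ T') hFind) with hLdef
  have hLspec := Classical.choose_spec (exists_coord (colA A) (S ∪ T') hFind)
  have hw'L : L btil = w' := by
    rw [← hw'A, mulVec_eq_sum]
    exact hLspec w' hw'supp
  have hxsL : L b = xs := by
    rw [← hAxs, mulVec_eq_sum]
    exact hLspec xs (fun j hj => Finset.mem_union_left _ (hxsupp j hj))
  have hclose : ∀ j, |w' j - xs j| ≤ ‖L‖ * ‖btil - b‖ := by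
    intro j
    have h1 : w' j - xs j = (L (btil - b)) j := by rw [map_sub, hw'L, hxsL]; rfl
    rw [h1]
    calc |(L (btil - b)) j| ≤ ‖L (btil - b)‖ := by
          rw [← Real.norm_eq_abs]; exact norm_le_pi_norm _ j
    _ ≤ ‖L‖ * ‖btil - b‖ := L.le_opNorm _
  have hEF : ‖btil - b‖ < δ / (‖L‖ + 1) := by
    have h1 : Finset.univ.inf' hune gF ≤ gF (S ∪ T') := Finset.inf'_le _ (Finset.mem_univ _)
    have h2 : gF (S ∪ T') = δ / (‖L‖ + 1) := by simp only [hgF]; rw [dif_pos hFind]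
    rw [← h2]
    exact lt_of_lt_of_le hnorm h1
  have hw'nn : ∀ j, 0 ≤ w' j := by
    intro j
    by_cases hjS : j ∈ S
    · have h1 := hclose j
      have h2 : ‖L‖ * ‖btil - b‖ < δ := by
        have hL1 : 0 < ‖L‖ + 1 := by positivity
        have h3 := (lt_div_iff₀ hL1).mp hEF
        nlinarith [norm_nonneg (btil - b), norm_nonneg L]
      have h3 := hδle j hjS
      have h4 := (abs_le.mp h1).1
      linarith
    · exact hw'pos j hjS
  obtain ⟨J, hFJ, hJZ, hJcard, hJind⟩ := extend_basis Zs hμsfull m (S ∪ T') hFZ hFind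
    (by omega)
  have hbasis' : IsBasis A (J.orderEmbOfFin hJcard) := isBasis_of_indep hJcard hJind
  have himJ : Finset.univ.image (⇑(J.orderEmbOfFin hJcard)) = J := image_orderEmbOfFin hJcard
  have hw'bs : w' = basicSol A (⇑(J.orderEmbOfFin hJcard)) btil :=
    basicSol_unique hbasis' btil
      (fun i hi => by rw [himJ]; exact hFJ (hw'supp i hi)) hw'A
  have hxs' : xs = basicSol A (⇑(J.orderEmbOfFin hJcard)) b :=
    basicSol_unique hbasis' b
      (fun i hi => by rw [himJ]; exact hFJ (Finset.mem_union_left _ (hxsupp i hi))) hAxs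
  have hdualJ : dualSol A c (⇑(J.orderEmbOfFin hJcard)) = μs := by
    apply dualSol_eq hbasis'
    intro k
    have hk : (J.orderEmbOfFin hJcard) k ∈ Zs := hJZ (J.orderEmbOfFin_mem hJcard k)
    exact mem_Zact.mp hk
  refine ⟨⇑(J.orderEmbOfFin hJcard), ⟨hbasis', ?_⟩, ⟨hbasis', ?_⟩, ?_, ?_⟩
  · intro i
    rw [← hxs']
    exact hP.2 i
  · intro j
    rw [hdualJ]
    exact hμsDS.1 j
  · rw [← hxs', hxs]
  · rw [← hw'bs]
    refine ⟨⟨hw'A, hw'nn⟩, ?_⟩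
    intro y hy
    have hcw : c ⬝ᵥ w' = μs ⬝ᵥ btil := by
      have h1 : c ⬝ᵥ w' = (Aᵀ *ᵥ μs) ⬝ᵥ w' := by
        rw [dotProduct, dotProduct]
        refine Finset.sum_congr rfl fun j _ => ?_
        by_cases hj : w' j = 0
        · rw [hj, mul_zero, mul_zero]
        · have hjZ : j ∈ Zs := hFZ (hw'supp j hj)
          rw [(mem_Zact.mp hjZ : (Aᵀ *ᵥ μs) j = c j)]
      rw [h1, ← hw'A]
      calc (Aᵀ *ᵥ μs) ⬝ᵥ w' = (μs ᵥ* A) ⬝ᵥ w' := by rw [mulVec_transpose]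
      _ = μs ⬝ᵥ (A *ᵥ w') := (dotProduct_mulVec μs A w').symm
    have hcy : μs ⬝ᵥ btil ≤ c ⬝ᵥ y := by
      obtain ⟨hyA, hypos⟩ := hy
      have h1 : μs ⬝ᵥ btil = (Aᵀ *ᵥ μs) ⬝ᵥ y := by
        rw [← hyA]
        calc μs ⬝ᵥ (A *ᵥ y) = (μs ᵥ* A) ⬝ᵥ y := dotProduct_mulVec μs A y
        _ = (Aᵀ *ᵥ μs) ⬝ᵥ y := by rw [mulVec_transpose]
      rw [h1, dotProduct, dotProduct]
      exact Finset.sum_le_sum fun j _ => mul_le_mul_of_nonneg_right (hμsDS.1 j) (hypos j)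
    rw [hcw]
    exact hcy

end Stmt11Aux

/-- Lemma 4.5: assume `OPT(b)` is non-empty and bounded. Consider the
equivalence relation on the bases that are both primal and dual feasible given
by `j ~ k` iff `x(I_j, b) = x(I_k, b)`. Then there exists `ε > 0` such that for
every `b̃` with `P(b̃) ≠ ∅` and `‖b̃ − b‖ < ε`, every equivalence class
(represented here by an arbitrary member `e`) contains a basis `e'` with
`x(e', b̃) ∈ OPT(b̃)`. -/
theorem stmt11 (hm : 1 ≤ m) (hmd : m ≤ d)
    (A : Matrix (Fin m) (Fin d) ℝ) (hA : A.rank = m)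
    (b : Fin m → ℝ) (c : Fin d → ℝ)
    (hne : (optSet A b c).Nonempty) (hbd : Bornology.IsBounded (optSet A b c)) :
    ∃ ε : ℝ, 0 < ε ∧ ∀ btil : Fin m → ℝ,
      (feasSet A btil).Nonempty → ‖btil - b‖ < ε →
      ∀ e : Fin m → Fin d,
        PrimalFeasibleBasis A b e → DualFeasibleBasis A c e →
        ∃ e' : Fin m → Fin d,
          PrimalFeasibleBasis A b e' ∧ DualFeasibleBasis A c e' ∧
          basicSol A e' b = basicSol A e b ∧
          basicSol A e' btil ∈ optSet A btil c := by
  classical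
  have key : ∀ e : Fin m → Fin d, ∃ ε : ℝ, 0 < ε ∧ ∀ btil : Fin m → ℝ,
      (feasSet A btil).Nonempty → ‖btil - b‖ < ε →
      PrimalFeasibleBasis A b e → DualFeasibleBasis A c e →
      ∃ e' : Fin m → Fin d,
        PrimalFeasibleBasis A b e' ∧ DualFeasibleBasis A c e' ∧
        basicSol A e' b = basicSol A e b ∧
        basicSol A e' btil ∈ optSet A btil c := by
    intro e
    by_cases h : PrimalFeasibleBasis A b e ∧ DualFeasibleBasis A c e
    · obtain ⟨ε, hε, H⟩ := Stmt11Aux.main_core hA b c e h.1 h.2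
      exact ⟨ε, hε, fun btil h1 h2 _ _ => H btil h1 h2⟩
    · exact ⟨1, one_pos, fun btil _ _ hP hD => absurd ⟨hP, hD⟩ h⟩
  choose f hf using key
  haveI : Nonempty (Fin m → Fin d) := ⟨fun _ => ⟨0, by omega⟩⟩
  have hune : (Finset.univ : Finset (Fin m → Fin d)).Nonempty := Finset.univ_nonempty
  refine ⟨Finset.univ.inf' hune f, ?_, ?_⟩
  · rw [Finset.lt_inf'_iff]
    exact fun e _ => (hf e).1
  · intro btil h1 h2 e hP hD
    have h2' : ‖btil - b‖ < f e :=
      lt_of_lt_of_le h2 (Finset.inf'_le _ (Finset.mem_univ e))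
    exact (hf e).2 btil h1 h2' hP hD

end
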